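/- Let X be a coarse topological space contained as a topologically dense subset of a Hausdorff space X̄, and write ∂X = X̄ \ X. If B ⊆ X is bounded with respect to the continuously controlled coarse structure relative to X̄ (i.e. B ⊆ M(x) for some continuously controlled set M and some point x ∈ X), then the closure of B in X̄ is compact and disjoint from ∂X (so this closure is contained in X). -/

import Mathlib

/-- An (abstract, unital) coarse structure on a set `X`: a collection of
"controlled" subsets of `X × X` containing the diagonal, closed under subsets,
finite unions, transposes and composites, whose union is all of `X × X`. -/
structure CoarseStructure (X : Type*) where
  IsControlled : Set (X × X) → Prop
  isControlled_diagonal : IsControlled {p : X × X | p.1 = p.2}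
  isControlled_subset : ∀ {M N : Set (X × X)}, IsControlled M → N ⊆ M → IsControlled N
  isControlled_union : ∀ {M N : Set (X × X)}, IsControlled M → IsControlled N →
    IsControlled (M ∪ N)
  isControlled_transpose : ∀ {M : Set (X × X)}, IsControlled M →
    IsControlled (Prod.swap '' M)
  isControlled_comp : ∀ {M N : Set (X × X)}, IsControlled M → IsControlled N →
    IsControlled {p : X × X | ∃ y, (p.1, y) ∈ M ∧ (y, p.2) ∈ N}
  isControlled_covers : ∀ p : X × X, ∃ M, IsControlled M ∧ p ∈ M

/-- A subset `B` of a coarse space is bounded if `B ⊆ M(x)` for some controlled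
set `M` and point `x`. -/
def CoarseStructure.IsBoundedSet {X : Type*} (C : CoarseStructure X) (B : Set X) : Prop :=
  ∃ M, C.IsControlled M ∧ ∃ x : X, B ⊆ {y : X | (x, y) ∈ M}

/-- A coarse structure on a (Hausdorff) topological space is compatible with the
topology if every controlled set is contained in an open controlled set and the
closure of every bounded set is compact. -/
structure CoarseStructure.Compatible {X : Type*} [TopologicalSpace X]
    (C : CoarseStructure X) : Prop where
  exists_open_controlled : ∀ M : Set (X × X), C.IsControlled M →
    ∃ U : Set (X × X), IsOpen U ∧ C.IsControlled U ∧ M ⊆ U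
  isCompact_closure_of_isBoundedSet : ∀ B : Set X, C.IsBoundedSet B → IsCompact (closure B)

section ContinuouslyControlled

variable {Xb : Type*} [TopologicalSpace Xb]

/-- Given a coarse topological space realised as a subset `s` of a Hausdorff
space `Xb`, with boundary `∂X = sᶜ`, an open set `M ⊆ X × X` is strongly
controlled if it is controlled for the ambient coarse structure and its closure
`M̄` in `X̄ × X̄` satisfies `M̄ ∩ ((X̄ × ∂X) ∪ (∂X × X̄)) ⊆ Δ_{∂X}`. -/
def StronglyControlled (s : Set Xb) (C : CoarseStructure ↥s)
    (M : Set (↥s × ↥s)) : Prop :=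
  IsOpen M ∧ C.IsControlled M ∧
    closure (Prod.map (Subtype.val) (Subtype.val) '' M) ∩
        {q : Xb × Xb | q.1 ∉ s ∨ q.2 ∉ s} ⊆
      {q : Xb × Xb | q.1 = q.2 ∧ q.1 ∉ s}

/-- The continuously controlled coarse structure relative to `Xb`: its
controlled sets are the finite composites of subsets of strongly controlled
open sets. -/
inductive CCControlled (s : Set Xb) (C : CoarseStructure ↥s) :
    Set (↥s × ↥s) → Prop
  | of_subset {M N : Set (↥s × ↥s)} : StronglyControlled s C M → N ⊆ M →
      CCControlled s C N
  | comp {M N : Set (↥s × ↥s)} : CCControlled s C M → CCControlled s C N →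
      CCControlled s C {q : ↥s × ↥s | ∃ y, (q.1, y) ∈ M ∧ (y, q.2) ∈ N}

end ContinuouslyControlled

/-- If `B` is bounded for the continuously controlled coarse
structure relative to `X̄`, then the closure of `B` in `X̄` is compact and
disjoint from `∂X = X̄ \ X`. -/
theorem cc_bounded_closure_compact_disjoint_boundary
    {Xb : Type*} [TopologicalSpace Xb] [T2Space Xb] (s : Set Xb)
    (hdense : Dense s) (C : CoarseStructure ↥s) (hC : C.Compatible)
    (B : Set ↥s)
    (hB : ∃ M, CCControlled s C M ∧ ∃ x : ↥s, B ⊆ {y : ↥s | (x, y) ∈ M}) :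
    IsCompact (closure (Subtype.val '' B)) ∧
      closure (Subtype.val '' B) ∩ (Set.univ \ s) = ∅ := by
  obtain ⟨M, hM, x, hBx⟩ := hB
  have hMc : C.IsControlled M := by
    clear hBx
    induction hM with
    | of_subset hSC hsub => exact C.isControlled_subset hSC.2.1 hsub
    | comp h1 h2 ih1 ih2 => exact C.isControlled_comp ih1 ih2
  have hK : IsCompact (closure B) :=
    hC.isCompact_closure_of_isBoundedSet B ⟨M, hMc, x, hBx⟩
  have hK' : IsCompact (Subtype.val '' closure B) := hK.image continuous_subtype_val
  have hKcl : IsClosed (Subtype.val '' closure B) := hK'.isClosed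
  have hcl : closure (Subtype.val '' B) ⊆ Subtype.val '' closure B :=
    closure_minimal (Set.image_mono subset_closure) hKcl
  refine ⟨hK'.of_isClosed_subset isClosed_closure hcl, ?_⟩
  ext p
  simp only [Set.mem_inter_iff, Set.mem_diff, Set.mem_univ, true_and,
    Set.mem_empty_iff_false, iff_false]
  rintro ⟨hp1, hp2⟩
  obtain ⟨y, -, rfl⟩ := hcl hp1
  exact hp2 y.2
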